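/- For every connected graph G on N vertices, the maximum hitting time of the biased random walk satisfies H_{P^B}(G) = max_{x,y} H_{P^B}(x,y) < N^4 / 2. -/

import Mathlib

open Finset

/-- Transition matrix of the biased random walk `X_B` on a graph `G` on `N` vertices:
`P^B_{ij} = (1/N)(1/|N_i| + 1/|N_j|)` for edges, `P^B_{ii} = 1 - Σ_{k ∈ N_i} P^B_{ik}`,
and `0` otherwise. -/
noncomputable def PB (N : ℕ) (G : SimpleGraph (Fin N)) [DecidableRel G.Adj] (i j : Fin N) : ℝ :=
  if G.Adj i j then (1 / (N : ℝ)) * (1 / (G.degree i : ℝ) + 1 / (G.degree j : ℝ))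
  else if i = j then
    1 - ∑ k ∈ G.neighborFinset i,
      (1 / (N : ℝ)) * (1 / (G.degree i : ℝ) + 1 / (G.degree k : ℝ))
  else 0

/-- `H` is the vector of expected hitting times of the Markov chain with transition
matrix `P^B` on the vertices of `G`: `H i j` is the expected number of steps a walk
started at `i` takes to first reach `j`, characterized by the first-step equations. -/
def IsHittingTime (N : ℕ) (G : SimpleGraph (Fin N)) [DecidableRel G.Adj]
    (H : Fin N → Fin N → ℝ) : Prop :=
  (∀ y, H y y = 0) ∧
  ∀ x y, x ≠ y → H x y = 1 + ∑ k : Fin N, PB N G x k * H k y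

section Aux

variable {N : ℕ} {G : SimpleGraph (Fin N)} [DecidableRel G.Adj]

lemma PB_symm (i j : Fin N) : PB N G i j = PB N G j i := by
  unfold PB
  by_cases h : G.Adj i j
  · rw [if_pos h, if_pos h.symm]; ring
  · by_cases hij : i = j
    · subst hij; rfl
    · rw [if_neg h, if_neg hij, if_neg (fun h' : G.Adj j i => h h'.symm), if_neg (Ne.symm hij)]

lemma adj_degree_pos {i j : Fin N} (h : G.Adj i j) : 0 < G.degree i :=
  (G.degree_pos_iff_exists_adj i).2 ⟨j, h⟩

lemma PB_row_sum (i : Fin N) : ∑ k, PB N G i k = 1 := by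
  have hsplit := Finset.sum_add_sum_compl (G.neighborFinset i) (fun k => PB N G i k)
  have h1 : ∑ k ∈ G.neighborFinset i, PB N G i k
      = ∑ k ∈ G.neighborFinset i,
          (1 / (N:ℝ)) * (1 / (G.degree i : ℝ) + 1 / (G.degree k : ℝ)) := by
    apply Finset.sum_congr rfl
    intro k hk
    rw [SimpleGraph.mem_neighborFinset] at hk
    simp [PB, hk]
  have h2 : ∑ k ∈ (G.neighborFinset i)ᶜ, PB N G i k
      = 1 - ∑ k ∈ G.neighborFinset i,
          (1/(N:ℝ)) * (1/(G.degree i:ℝ) + 1/(G.degree k:ℝ)) := by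
    rw [Finset.sum_eq_single_of_mem i (by simp)]
    · simp [PB]
    · intro b hb hbi
      rw [Finset.mem_compl, SimpleGraph.mem_neighborFinset] at hb
      simp [PB, hb, Ne.symm hbi]
  rw [h1, h2] at hsplit
  linarith [hsplit]

lemma PB_nonneg (i j : Fin N) : 0 ≤ PB N G i j := by
  unfold PB
  split_ifs with h1 h2
  · have hdi : (0:ℝ) < (G.degree i : ℝ) := by exact_mod_cast adj_degree_pos h1
    have hdj : (0:ℝ) < (G.degree j : ℝ) := by exact_mod_cast adj_degree_pos h1.symm
    have hN0 : (0:ℝ) ≤ (N:ℝ) := Nat.cast_nonneg N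
    positivity
  · -- diagonal
    rcases Nat.eq_zero_or_pos (G.degree i) with hd0 | hdpos
    · have : G.neighborFinset i = ∅ := by
        rw [← Finset.card_eq_zero, G.card_neighborFinset_eq_degree] at *
        exact hd0
      simp [this]
    · have hdi : (0:ℝ) < (G.degree i : ℝ) := by exact_mod_cast hdpos
      have hNpos : 0 < N := by
        have := G.degree_lt_card_verts i
        simp only [Fintype.card_fin] at this
        omega
      have hNR : (0:ℝ) < (N:ℝ) := by exact_mod_cast hNpos
      have hdN : (G.degree i : ℝ) + 1 ≤ (N:ℝ) := by
        have := G.degree_lt_card_verts i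
        simp only [Fintype.card_fin] at this
        exact_mod_cast this
      have hsum : ∑ k ∈ G.neighborFinset i,
          (1/(N:ℝ)) * (1/(G.degree i:ℝ) + 1/(G.degree k:ℝ))
          ≤ (G.neighborFinset i).card • ((1/(N:ℝ)) * (1/(G.degree i:ℝ) + 1)) := by
        apply Finset.sum_le_card_nsmul
        intro k hk
        rw [SimpleGraph.mem_neighborFinset] at hk
        have hdk : (1:ℝ) ≤ (G.degree k : ℝ) := by exact_mod_cast adj_degree_pos hk.symm
        have : 1/(G.degree k:ℝ) ≤ 1 := by
          rw [div_le_one (by linarith)]; linarith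
        have h1N : (0:ℝ) ≤ 1/(N:ℝ) := by positivity
        nlinarith
      rw [G.card_neighborFinset_eq_degree, nsmul_eq_mul] at hsum
      have hkey : (G.degree i : ℝ) * ((1/(N:ℝ)) * (1/(G.degree i:ℝ) + 1)) ≤ 1 := by
        have heq : (G.degree i : ℝ) * ((1/(N:ℝ)) * (1/(G.degree i:ℝ) + 1))
            = (1 + (G.degree i:ℝ))/(N:ℝ) := by
          field_simp
        rw [heq, div_le_one hNR]
        linarith
      linarith
  · exact le_refl 0


lemma PB_edge_lb (hN : 2 ≤ N) {i j : Fin N} (h : G.Adj i j) :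
    2 ≤ PB N G i j * ((N:ℝ) * ((N:ℝ) - 1)) := by
  have hdi1 : 0 < G.degree i := adj_degree_pos h
  have hdj1 : 0 < G.degree j := adj_degree_pos h.symm
  have hdiN : G.degree i + 1 ≤ N := by
    have := G.degree_lt_card_verts i; simpa using this
  have hdjN : G.degree j + 1 ≤ N := by
    have := G.degree_lt_card_verts j; simpa using this
  have hdi : (1:ℝ) ≤ (G.degree i:ℝ) := by exact_mod_cast hdi1
  have hdj : (1:ℝ) ≤ (G.degree j:ℝ) := by exact_mod_cast hdj1
  have hdiN' : (G.degree i:ℝ) ≤ (N:ℝ) - 1 := by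
    have : ((G.degree i : ℕ) : ℝ) + 1 ≤ (N:ℝ) := by exact_mod_cast hdiN
    linarith
  have hdjN' : (G.degree j:ℝ) ≤ (N:ℝ) - 1 := by
    have : ((G.degree j : ℕ) : ℝ) + 1 ≤ (N:ℝ) := by exact_mod_cast hdjN
    linarith
  have hNR : (2:ℝ) ≤ (N:ℝ) := by exact_mod_cast hN
  rw [PB, if_pos h]
  have key : (1/(N:ℝ)) * (1/(G.degree i:ℝ) + 1/(G.degree j:ℝ)) * ((N:ℝ) * ((N:ℝ) - 1))
      = ((N:ℝ)-1)/(G.degree i:ℝ) + ((N:ℝ)-1)/(G.degree j:ℝ) := by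
    field_simp
  rw [key]
  have h1 : (1:ℝ) ≤ ((N:ℝ)-1)/(G.degree i:ℝ) := by
    rw [le_div_iff₀ (by linarith)]; linarith
  have h2 : (1:ℝ) ≤ ((N:ℝ)-1)/(G.degree j:ℝ) := by
    rw [le_div_iff₀ (by linarith)]; linarith
  linarith

lemma hit_nonneg {H : Fin N → Fin N → ℝ} (hH : IsHittingTime N G H) (x y : Fin N) :
    0 ≤ H x y := by
  obtain ⟨x₀, -, hx₀⟩ := Finset.exists_min_image Finset.univ (fun x => H x y)
    ⟨y, Finset.mem_univ y⟩
  have hall : ∀ b, H x₀ y ≤ H b y := fun b => hx₀ b (Finset.mem_univ b)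
  have h0 : 0 ≤ H x₀ y := by
    rcases eq_or_ne x₀ y with rfl | hne
    · rw [hH.1]
    · exfalso
      have h2 : ∑ k, PB N G x₀ k * H x₀ y ≤ ∑ k, PB N G x₀ k * H k y :=
        Finset.sum_le_sum (fun k _ => mul_le_mul_of_nonneg_left (hall k) (PB_nonneg _ _))
      have h3 : ∑ k, PB N G x₀ k * H x₀ y = H x₀ y := by
        rw [← Finset.sum_mul, PB_row_sum, one_mul]
      have h4 := hH.2 x₀ y hne
      linarith
  exact le_trans h0 (hall x)

lemma cut_flow {H : Fin N → Fin N → ℝ} (hH : IsHittingTime N G H) (y : Fin N)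
    (A : Finset (Fin N)) (hy : y ∉ A) :
    ∑ x ∈ A, ∑ k ∈ Aᶜ, PB N G x k * (H x y - H k y) = A.card := by
  have hdiv : ∀ x ∈ A, ∑ k, PB N G x k * (H x y - H k y) = 1 := by
    intro x hx
    have hxy : x ≠ y := fun e => hy (e ▸ hx)
    have h4 := hH.2 x y hxy
    have h5 : ∑ k, PB N G x k * (H x y - H k y)
        = (∑ k, PB N G x k) * H x y - ∑ k, PB N G x k * H k y := by
      rw [Finset.sum_mul, ← Finset.sum_sub_distrib]
      apply Finset.sum_congr rfl; intros; ring
    rw [h5, PB_row_sum, one_mul]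
    linarith
  have htot : ∑ x ∈ A, ∑ k, PB N G x k * (H x y - H k y) = A.card := by
    rw [Finset.sum_congr rfl hdiv]; simp
  have hanti : ∑ x ∈ A, ∑ k ∈ A, PB N G x k * (H x y - H k y) = 0 := by
    have e1 : ∑ x ∈ A, ∑ k ∈ A, PB N G x k * (H x y - H k y)
        = (∑ x ∈ A, ∑ k ∈ A, PB N G x k * H x y)
          - ∑ x ∈ A, ∑ k ∈ A, PB N G x k * H k y := by
      rw [← Finset.sum_sub_distrib]
      apply Finset.sum_congr rfl; intro x _
      rw [← Finset.sum_sub_distrib]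
      apply Finset.sum_congr rfl; intros; ring
    have e2 : ∑ x ∈ A, ∑ k ∈ A, PB N G x k * H k y
        = ∑ x ∈ A, ∑ k ∈ A, PB N G x k * H x y := by
      rw [Finset.sum_comm]
      apply Finset.sum_congr rfl; intro a _
      apply Finset.sum_congr rfl; intro b _
      rw [PB_symm b a]
    rw [e1, e2, sub_self]
  have hsplitx : ∀ x, ∑ k ∈ Aᶜ, PB N G x k * (H x y - H k y)
      = (∑ k, PB N G x k * (H x y - H k y)) - ∑ k ∈ A, PB N G x k * (H x y - H k y) := by
    intro x
    have := Finset.sum_add_sum_compl A (fun k => PB N G x k * (H x y - H k y))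
    linarith
  calc ∑ x ∈ A, ∑ k ∈ Aᶜ, PB N G x k * (H x y - H k y)
      = (∑ x ∈ A, ∑ k, PB N G x k * (H x y - H k y))
        - ∑ x ∈ A, ∑ k ∈ A, PB N G x k * (H x y - H k y) := by
        rw [← Finset.sum_sub_distrib]
        exact Finset.sum_congr rfl (fun x _ => hsplitx x)
    _ = A.card := by rw [htot, hanti, sub_zero]

lemma edge_diff (hN : 2 ≤ N) {H : Fin N → Fin N → ℝ} (hH : IsHittingTime N G H)
    {u v : Fin N} (huv : G.Adj u v) (y : Fin N) :
    H u y - H v y ≤ (N:ℝ)^2 * ((N:ℝ) - 1) / 2 := by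
  classical
  have hNR : (2:ℝ) ≤ (N:ℝ) := by exact_mod_cast hN
  rcases le_or_gt (H u y) (H v y) with hle | hlt
  · nlinarith
  · set A : Finset (Fin N) := Finset.univ.filter (fun z => H v y < H z y) with hA
    have hyA : y ∉ A := by
      simp only [hA, Finset.mem_filter, Finset.mem_univ, true_and, not_lt]
      rw [hH.1]
      exact hit_nonneg hH v y
    have huA : u ∈ A := by
      simp only [hA, Finset.mem_filter, Finset.mem_univ, true_and]
      exact hlt
    have hvA : v ∈ Aᶜ := by
      simp only [hA, Finset.mem_compl, Finset.mem_filter, Finset.mem_univ, true_and, not_lt]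
      exact le_refl _
    have hnonneg : ∀ x ∈ A, ∀ k ∈ Aᶜ, 0 ≤ PB N G x k * (H x y - H k y) := by
      intro x hx k hk
      simp only [hA, Finset.mem_filter, Finset.mem_univ, true_and] at hx
      simp only [hA, Finset.mem_compl, Finset.mem_filter, Finset.mem_univ, true_and,
        not_lt] at hk
      exact mul_nonneg (PB_nonneg _ _) (by linarith)
    have hcut := cut_flow hH y A hyA
    have hsingle : PB N G u v * (H u y - H v y) ≤ (A.card : ℝ) := by
      calc PB N G u v * (H u y - H v y)
          ≤ ∑ k ∈ Aᶜ, PB N G u k * (H u y - H k y) :=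
            Finset.single_le_sum (fun k hk => hnonneg u huA k hk) hvA
        _ ≤ ∑ x ∈ A, ∑ k ∈ Aᶜ, PB N G x k * (H x y - H k y) :=
            Finset.single_le_sum
              (fun x hx => Finset.sum_nonneg (fun k hk => hnonneg x hx k hk)) huA
        _ = A.card := hcut
    have hcard : (A.card : ℝ) ≤ (N:ℝ) := by
      have h1 : A.card ≤ N := le_trans (Finset.card_le_univ A) (by simp)
      exact_mod_cast h1
    have hlb := PB_edge_lb hN huv
    have hPD : PB N G u v * (H u y - H v y) ≤ (N:ℝ) := hsingle.trans hcard
    have h6 : 2 * (H u y - H v y)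
        ≤ PB N G u v * ((N:ℝ) * ((N:ℝ) - 1)) * (H u y - H v y) :=
      mul_le_mul_of_nonneg_right hlb (by linarith)
    have h7 : PB N G u v * (H u y - H v y) * ((N:ℝ) * ((N:ℝ) - 1))
        ≤ (N:ℝ) * ((N:ℝ) * ((N:ℝ) - 1)) :=
      mul_le_mul_of_nonneg_right hPD (by nlinarith)
    nlinarith [h6, h7]

lemma walk_bound (hN : 2 ≤ N) {H : Fin N → Fin N → ℝ} (hH : IsHittingTime N G H)
    (y : Fin N) {u x : Fin N} (w : G.Walk u x) :
    H x y ≤ H u y + w.length * ((N:ℝ)^2 * ((N:ℝ) - 1) / 2) := by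
  induction w with
  | nil => simp
  | @cons a b c hab p ih =>
    have hedge := edge_diff hN hH hab.symm y
    rw [SimpleGraph.Walk.length_cons]
    push_cast
    linarith

end Aux

/-- For every connected graph `G` on `N` vertices, the maximum hitting
time of the biased random walk satisfies `H_{P^B}(G) = max_{x,y} H_{P^B}(x,y) < N^4 / 2`. -/
theorem biased_walk_hitting_time_bound (N : ℕ) (hN : 2 ≤ N) (G : SimpleGraph (Fin N))
    [DecidableRel G.Adj] (hG : G.Connected) (H : Fin N → Fin N → ℝ)
    (hH : IsHittingTime N G H) :
    ∀ x y : Fin N, H x y < (N : ℝ) ^ 4 / 2 := by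
  intro x y
  have hNR : (2:ℝ) ≤ (N:ℝ) := by exact_mod_cast hN
  rcases eq_or_ne x y with rfl | hne
  · rw [hH.1]
    have h0 : (0:ℝ) < (N:ℝ) := by linarith
    positivity
  · obtain ⟨w⟩ := hG.preconnected y x
    classical
    have hp : (w.toPath : G.Walk y x).IsPath := w.toPath.2
    have hlen : (w.toPath : G.Walk y x).length < N := by
      have := hp.length_lt
      simpa using this
    have hb := walk_bound hN hH y (w.toPath : G.Walk y x)
    rw [hH.1] at hb
    have hC : (0:ℝ) ≤ (N:ℝ)^2 * ((N:ℝ) - 1) / 2 := by nlinarith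
    have hlenR : ((w.toPath : G.Walk y x).length : ℝ) ≤ (N:ℝ) - 1 := by
      have h1 : (w.toPath : G.Walk y x).length + 1 ≤ N := hlen
      have h2 : (((w.toPath : G.Walk y x).length : ℕ) : ℝ) + 1 ≤ (N:ℝ) := by
        exact_mod_cast h1
      linarith
    have hfin : H x y ≤ ((N:ℝ) - 1) * ((N:ℝ)^2 * ((N:ℝ) - 1) / 2) := by
      have := mul_le_mul_of_nonneg_right hlenR hC
      linarith
    nlinarith
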